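/- Fix φ ∈ (0, ∞) and let R_φ be the isotropic subagged ridgeless risk function on [φ, ∞) \ {1}. (1) If ρ² = 0 and σ² > 0, then R_φ(θ) > σ² for every θ ∈ [φ, ∞) \ {1}, the infimum of R_φ over [φ, ∞) \ {1} equals σ², and R_φ(θ) → σ² as θ → ∞. (2) If σ² = 0 and ρ² > 0, then: when φ < 1, R_φ(θ) = 0 for every θ ∈ [φ, 1) and R_φ(θ) > 0 for every θ ∈ (1, ∞), so the global minimum value 0 is attained at every θ ∈ [φ, 1); when φ > 1, the map θ ↦ R_φ(θ) is non-decreasing on [φ, ∞), so its global minimum over [φ, ∞) is attained at θ = φ with value ρ²·(φ − 1)/φ. (Optimal subagged ridgeless risk under isotropic features in the degenerate signal-to-noise regimes SNR = 0 and SNR = ∞.) -/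
import Mathlib


open Filter Set

/-- Optimal subagged ridgeless risk under isotropic features in the degenerate
signal-to-noise regimes `SNR = 0` and `SNR = ∞`. -/
theorem isotropic_subagged_ridgeless_degenerate_snr
    (φ : ℝ) (hφ : 0 < φ) (ρ2 σ2 : ℝ)
    (R : ℝ → ℝ)
    (hR1 : ∀ θ : ℝ, θ < 1 → R θ = σ2 + σ2 * φ / (1 - φ))
    (hR2 : ∀ θ : ℝ, 1 < θ →
      R θ = σ2 + ρ2 * (θ - 1) ^ 2 / (θ ^ 2 - φ) + σ2 * φ / (θ ^ 2 - φ)) :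
    ((ρ2 = 0 ∧ 0 < σ2) →
      (∀ θ : ℝ, φ ≤ θ → θ ≠ 1 → σ2 < R θ)
      ∧ sInf (R '' {θ : ℝ | φ ≤ θ ∧ θ ≠ 1}) = σ2
      ∧ Tendsto R atTop (nhds σ2))
    ∧ ((σ2 = 0 ∧ 0 < ρ2) →
      (φ < 1 →
        (∀ θ : ℝ, φ ≤ θ → θ < 1 → R θ = 0) ∧ (∀ θ : ℝ, 1 < θ → 0 < R θ))
      ∧ (1 < φ →
        MonotoneOn R (Ici φ)
        ∧ (∀ θ : ℝ, φ ≤ θ → R φ ≤ R θ)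
        ∧ R φ = ρ2 * (φ - 1) / φ)) := by
  constructor
  · rintro ⟨hρ, hσ⟩
    -- strict lower bound
    have hgt : ∀ θ : ℝ, φ ≤ θ → θ ≠ 1 → σ2 < R θ := by
      intro θ hθφ hθ1
      rcases lt_or_gt_of_ne hθ1 with h | h
      · have hφ1 : φ < 1 := lt_of_le_of_lt hθφ h
        rw [hR1 θ h]
        have : 0 < σ2 * φ / (1 - φ) := div_pos (mul_pos hσ hφ) (by linarith)
        linarith
      · have hden : 0 < θ ^ 2 - φ := by nlinarith
        rw [hR2 θ h, hρ]
        have h1 : 0 < σ2 * φ / (θ ^ 2 - φ) := by positivity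
        have h0 : (0:ℝ) * (θ - 1) ^ 2 / (θ ^ 2 - φ) = 0 := by
          rw [zero_mul, zero_div]
        rw [h0]
        linarith
    have hT : Tendsto R atTop (nhds σ2) := by
      have h1 : Tendsto (fun θ : ℝ => θ ^ 2 - φ) atTop atTop := by
        simpa [sub_eq_add_neg] using
          Filter.tendsto_atTop_add_const_right atTop (-φ)
            (tendsto_pow_atTop (two_ne_zero))
      have h2 : Tendsto (fun θ : ℝ => σ2 * φ / (θ ^ 2 - φ)) atTop (nhds 0) :=
        Tendsto.div_atTop tendsto_const_nhds h1
      have h3 : Tendsto (fun θ : ℝ => σ2 + σ2 * φ / (θ ^ 2 - φ)) atTop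
          (nhds σ2) := by
        simpa using h2.const_add σ2
      refine h3.congr' ?_
      filter_upwards [eventually_gt_atTop (1:ℝ)] with θ hθ
      rw [hR2 θ hθ, hρ]; ring
    refine ⟨hgt, ?_, hT⟩
    have hbdd : ∀ y ∈ R '' {θ : ℝ | φ ≤ θ ∧ θ ≠ 1}, σ2 ≤ y := by
      rintro y ⟨θ, ⟨h1, h2⟩, rfl⟩
      exact (hgt θ h1 h2).le
    have hne : (R '' {θ : ℝ | φ ≤ θ ∧ θ ≠ 1}).Nonempty :=
      ⟨R (φ + 2), ⟨φ + 2, ⟨by linarith, by intro h; linarith⟩, rfl⟩⟩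
    refine le_antisymm ?_ (le_csInf hne hbdd)
    refine le_of_forall_pos_le_add fun ε hε => ?_
    have hev := (hT.eventually (eventually_lt_nhds
      (by linarith : σ2 < σ2 + ε))).and (eventually_ge_atTop (max φ 2))
    rcases hev.exists with ⟨θ, hθ1, hθ2⟩
    have hmem : R θ ∈ R '' {θ : ℝ | φ ≤ θ ∧ θ ≠ 1} := by
      refine ⟨θ, ⟨le_trans (le_max_left _ _) hθ2, ?_⟩, rfl⟩
      have h2θ : (2:ℝ) ≤ θ := le_trans (le_max_right _ _) hθ2
      intro h; rw [h] at h2θ; linarith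
    exact le_trans (csInf_le ⟨σ2, hbdd⟩ hmem) hθ1.le
  · rintro ⟨hσ, hρ⟩
    constructor
    · intro hφ1
      constructor
      · intro θ _ hθ1
        rw [hR1 θ hθ1, hσ]; ring
      · intro θ hθ1
        have hden : 0 < θ ^ 2 - φ := by nlinarith
        rw [hR2 θ hθ1, hσ]
        have hm1 : 0 < (θ - 1) ^ 2 := pow_pos (by linarith) 2
        have hpos : 0 < ρ2 * (θ - 1) ^ 2 / (θ ^ 2 - φ) := div_pos (mul_pos hρ hm1) hden
        have h0 : (0:ℝ) * φ / (θ ^ 2 - φ) = 0 := by rw [zero_mul, zero_div]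
        rw [h0]
        linarith
    · intro hφ1
      have key : ∀ a b : ℝ, φ ≤ a → a ≤ b → R a ≤ R b := by
        intro a b ha hab
        have ha1 : 1 < a := lt_of_lt_of_le hφ1 ha
        have hb1 : 1 < b := lt_of_lt_of_le ha1 hab
        have hda : 0 < a ^ 2 - φ := by nlinarith
        have hdb : 0 < b ^ 2 - φ := by nlinarith
        rw [hR2 a ha1, hR2 b hb1, hσ]
        have h0a : (0:ℝ) * φ / (a ^ 2 - φ) = 0 := by rw [zero_mul, zero_div]
        have h0b : (0:ℝ) * φ / (b ^ 2 - φ) = 0 := by rw [zero_mul, zero_div]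
        rw [h0a, h0b]
        have hfrac : (a - 1) ^ 2 / (a ^ 2 - φ) ≤ (b - 1) ^ 2 / (b ^ 2 - φ) := by
          rw [div_le_div_iff₀ hda hdb]
          nlinarith [mul_nonneg (sub_nonneg.2 hab)
              (mul_nonneg (by linarith : (0:ℝ) ≤ a - 1) (by linarith : (0:ℝ) ≤ b - φ)),
            mul_nonneg (sub_nonneg.2 hab)
              (mul_nonneg (by linarith : (0:ℝ) ≤ b - 1) (by linarith : (0:ℝ) ≤ a - φ))]
        calc 0 + ρ2 * (a - 1) ^ 2 / (a ^ 2 - φ) + 0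
            = ρ2 * ((a - 1) ^ 2 / (a ^ 2 - φ)) := by ring
          _ ≤ ρ2 * ((b - 1) ^ 2 / (b ^ 2 - φ)) :=
              mul_le_mul_of_nonneg_left hfrac hρ.le
          _ = 0 + ρ2 * (b - 1) ^ 2 / (b ^ 2 - φ) + 0 := by ring
      refine ⟨fun a ha b hb hab => key a b ha hab,
        fun θ hθ => key φ θ le_rfl hθ, ?_⟩
      rw [hR2 φ hφ1, hσ]
      have hφ0 : φ ≠ 0 := ne_of_gt hφ
      have hden : φ ^ 2 - φ ≠ 0 := by nlinarith
      field_simp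
      ring
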